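/- Let α ∈ (0,1) and let (p_n)_{n∈ℕ} be a probability mass function on ℕ. Then p satisfies p_n = α ∑_{j=0}^∞ C(j,n) p_j for every n ∈ ℕ (with all these sums finite) if and only if p is the Poisson distribution with mean μ = −ln(α), i.e. p_n = e^{−μ} μ^n / n! = α (−ln α)^n / n! for all n ∈ ℕ. -/

import Mathlib

open MeasureTheory ENNReal Filter Real Topology

lemma tsum_rpow_holder (f g : ℕ → ℝ) (hf0 : ∀ n, 0 ≤ f n) (hg0 : ∀ n, 0 ≤ g n)
    (hf : Summable f) (hg : Summable g) {l : ℝ} (hl0 : 0 < l) (hl1 : l < 1) :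
    ∑' n, (f n) ^ l * (g n) ^ (1 - l) ≤ (∑' n, f n) ^ l * (∑' n, g n) ^ (1 - l) := by
  have hl1' : 0 < 1 - l := by linarith
  have hpq : (1 / l).HolderConjugate (1 / (1 - l)) :=
    Real.holderConjugate_iff.mpr ⟨one_lt_one_div hl0 hl1, by rw [one_div, inv_inv, one_div, inv_inv]; ring⟩
  set F : ℕ → ℝ≥0∞ := fun n => ENNReal.ofReal (f n) with hF
  set G : ℕ → ℝ≥0∞ := fun n => ENNReal.ofReal (g n) with hG
  have key := ENNReal.lintegral_mul_le_Lp_mul_Lq (Measure.count : Measure ℕ) hpq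
    (f := fun n => F n ^ l) (g := fun n => G n ^ (1 - l))
    (Measurable.aemeasurable (by measurability)) (Measurable.aemeasurable (by measurability))
  rw [MeasureTheory.lintegral_count, MeasureTheory.lintegral_count, MeasureTheory.lintegral_count]
    at key
  have e1 : ∀ n, (F n ^ l) ^ (1/l) = F n := by
    intro n
    rw [← ENNReal.rpow_mul, mul_one_div, div_self hl0.ne', ENNReal.rpow_one]
  have e2 : ∀ n, (G n ^ (1 - l)) ^ (1/(1-l)) = G n := by
    intro n
    rw [← ENNReal.rpow_mul, mul_one_div, div_self hl1'.ne', ENNReal.rpow_one]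
  simp only [Pi.mul_apply, e1, e2] at key
  have hL0 : ∀ n, 0 ≤ f n ^ l * g n ^ (1 - l) := fun n =>
    mul_nonneg (Real.rpow_nonneg (hf0 n) _) (Real.rpow_nonneg (hg0 n) _)
  have hLsum : Summable fun n => f n ^ l * g n ^ (1 - l) := by
    refine Summable.of_nonneg_of_le hL0 (fun n => ?_) ((hf.mul_left l).add (hg.mul_left (1-l)))
    exact Real.geom_mean_le_arith_mean2_weighted hl0.le hl1'.le (hf0 n) (hg0 n) (by ring)
  have lhs_eq : ∑' n, F n ^ l * G n ^ (1 - l)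
      = ENNReal.ofReal (∑' n, f n ^ l * g n ^ (1 - l)) := by
    rw [ENNReal.ofReal_tsum_of_nonneg hL0 hLsum]
    congr 1; funext n
    rw [ENNReal.ofReal_mul (Real.rpow_nonneg (hf0 n) _),
      ENNReal.ofReal_rpow_of_nonneg (hf0 n) hl0.le,
      ENNReal.ofReal_rpow_of_nonneg (hg0 n) hl1'.le]
  have rhs_eq : (∑' n, F n) ^ (1/(1/l)) * (∑' n, G n) ^ (1/(1/(1-l)))
      = ENNReal.ofReal ((∑' n, f n) ^ l * (∑' n, g n) ^ (1 - l)) := by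
    rw [one_div_one_div, one_div_one_div, ← ENNReal.ofReal_tsum_of_nonneg hf0 hf,
      ← ENNReal.ofReal_tsum_of_nonneg hg0 hg,
      ENNReal.ofReal_mul (Real.rpow_nonneg (tsum_nonneg hf0) _),
      ENNReal.ofReal_rpow_of_nonneg (tsum_nonneg hf0) hl0.le,
      ENNReal.ofReal_rpow_of_nonneg (tsum_nonneg hg0) hl1'.le]
  rw [lhs_eq, rhs_eq] at key
  rw [ENNReal.ofReal_le_ofReal_iff (mul_nonneg (Real.rpow_nonneg (tsum_nonneg hf0) _)
    (Real.rpow_nonneg (tsum_nonneg hg0) _))] at key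
  exact key

lemma coeffs_zero_aux (q : ℕ → ℝ) (hq : Summable fun n => |q n|)
    (h : ∀ x : ℝ, 0 < x → x ≤ 1 → ∑' n, q n * x ^ n = 0) (n : ℕ)
    (ih : ∀ k, k < n → q k = 0) : q n = 0 := by
  have hC0 : (0:ℝ) ≤ ∑' k, |q k| := tsum_nonneg fun k => abs_nonneg _
  have key : ∀ x : ℝ, 0 < x → x ≤ 1 → |q n| ≤ (∑' k, |q k|) * x := by
    intro x hx0 hx1
    have hxn : (0:ℝ) < x ^ n := pow_pos hx0 n
    have hx1k : ∀ k : ℕ, x ^ k ≤ 1 := fun k => pow_le_one₀ hx0.le hx1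
    have hsum : Summable fun k => q k * x ^ k := by
      apply Summable.of_abs
      refine Summable.of_nonneg_of_le (fun k => abs_nonneg _) (fun k => ?_) hq
      rw [abs_mul, abs_pow, abs_of_pos hx0]
      calc |q k| * x ^ k ≤ |q k| * 1 := mul_le_mul_of_nonneg_left (hx1k k) (abs_nonneg _)
        _ = |q k| := mul_one _
    have hsumtail : Summable fun k => q (k + (n+1)) * x ^ (k + (n+1)) :=
      (summable_nat_add_iff (f := fun k => q k * x ^ k) (n+1)).2 hsum
    have hqtail : Summable fun k => |q (k + (n+1))| :=
      (summable_nat_add_iff (f := fun k => |q k|) (n+1)).2 hq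
    have hsplit := Summable.sum_add_tsum_nat_add (f := fun k => q k * x ^ k) (n+1) hsum
    rw [h x hx0 hx1] at hsplit
    have hfin : ∑ k ∈ Finset.range (n+1), q k * x ^ k = q n * x ^ n := by
      refine Finset.sum_eq_single n (fun k hk hkn => ?_)
        (fun hn => absurd (Finset.self_mem_range_succ n) hn)
      have : q k = 0 := ih k (by have := Finset.mem_range.1 hk; omega)
      simp [this]
    rw [hfin] at hsplit
    have hneg : q n * x ^ n = -∑' k, q (k + (n+1)) * x ^ (k + (n+1)) := by linarith
    have tb1 : ∀ k : ℕ, |q (k + (n+1)) * x ^ (k + (n+1))| ≤ |q (k + (n+1))| * x ^ (n+1) := by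
      intro k
      rw [abs_mul, abs_pow, abs_of_pos hx0]
      refine mul_le_mul_of_nonneg_left ?_ (abs_nonneg _)
      calc x ^ (k + (n+1)) = x ^ k * x ^ (n+1) := by ring
        _ ≤ 1 * x ^ (n+1) := mul_le_mul_of_nonneg_right (hx1k k) (pow_nonneg hx0.le _)
        _ = x ^ (n+1) := one_mul _
    have htail : |q n * x ^ n| ≤ (∑' k, |q k|) * x ^ (n+1) := by
      rw [hneg, abs_neg]
      calc |∑' k, q (k + (n+1)) * x ^ (k + (n+1))|
          ≤ ∑' k, |q (k + (n+1)) * x ^ (k + (n+1))| := by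
            have h1 : Summable fun k => ‖q (k + (n+1)) * x ^ (k + (n+1))‖ := by
              simpa only [Real.norm_eq_abs] using hsumtail.abs
            have h2 := norm_tsum_le_tsum_norm h1
            simpa only [Real.norm_eq_abs] using h2
        _ ≤ ∑' k, |q (k + (n+1))| * x ^ (n+1) :=
            Summable.tsum_le_tsum tb1 hsumtail.abs (hqtail.mul_right _)
        _ = (∑' k, |q (k + (n+1))|) * x ^ (n+1) := tsum_mul_right
        _ ≤ (∑' k, |q k|) * x ^ (n+1) := by
            refine mul_le_mul_of_nonneg_right ?_ (pow_nonneg hx0.le _)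
            have h2 := Summable.sum_add_tsum_nat_add (f := fun k => |q k|) (n+1) hq
            have hfs : 0 ≤ ∑ k ∈ Finset.range (n+1), |q k| :=
              Finset.sum_nonneg fun k _ => abs_nonneg _
            linarith
    rw [abs_mul, abs_pow, abs_of_pos hx0] at htail
    have h3 : |q n| * x ^ n ≤ (∑' k, |q k|) * x * x ^ n := by
      calc |q n| * x ^ n ≤ (∑' k, |q k|) * x ^ (n+1) := htail
        _ = (∑' k, |q k|) * x * x ^ n := by ring
    exact le_of_mul_le_mul_right h3 hxn
  have hten : Filter.Tendsto (fun k : ℕ => (∑' k, |q k|) * (1 / (k+1) : ℝ))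
      Filter.atTop (nhds 0) := by
    simpa using tendsto_one_div_add_atTop_nhds_zero_nat.const_mul (∑' k, |q k|)
  have hle : ∀ k : ℕ, |q n| ≤ (∑' k, |q k|) * (1 / (k+1) : ℝ) := by
    intro k
    refine key _ (by positivity) ?_
    rw [div_le_one (by positivity)]
    linarith [Nat.cast_nonneg (α := ℝ) k]
  have h4 : |q n| ≤ 0 := le_of_tendsto_of_tendsto' tendsto_const_nhds hten hle
  exact abs_eq_zero.1 (le_antisymm h4 (abs_nonneg _))

lemma coeffs_eq_zero_of_tsum_eq_zero (q : ℕ → ℝ) (hq : Summable fun n => |q n|)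
    (h : ∀ x : ℝ, 0 < x → x ≤ 1 → ∑' n, q n * x ^ n = 0) : ∀ n, q n = 0 := by
  intro n
  induction n using Nat.strong_induction_on with
  | _ n ih => exact coeffs_zero_aux q hq h n ih

lemma nat_mul_log_sub_tendsto {x y : ℝ} (hx : 0 < x) (hxy : x < y) :
    Tendsto (fun n : ℕ => (n:ℝ) * (Real.log ((n:ℝ) + y) - Real.log ((n:ℝ) + x)))
      atTop (𝓝 (y - x)) := by
  have hA : Tendsto (fun n : ℕ => ((n:ℝ) + x) * Real.log (1 + (y - x) / ((n:ℝ) + x)))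
      atTop (𝓝 (y - x)) := by
    have base := Real.tendsto_mul_log_one_add_div_atTop (y - x)
    have hcomp : Tendsto (fun n : ℕ => (n:ℝ) + x) atTop atTop :=
      tendsto_atTop_add_const_right _ x tendsto_natCast_atTop_atTop
    exact base.comp hcomp
  have hB : Tendsto (fun n : ℕ => (n:ℝ) / ((n:ℝ) + x)) atTop (𝓝 1) := by
    have h1 : Tendsto (fun n : ℕ => x / ((n:ℝ) + x)) atTop (𝓝 0) :=
      Tendsto.div_atTop tendsto_const_nhds
        (tendsto_atTop_add_const_right _ x tendsto_natCast_atTop_atTop)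
    have h2 : Tendsto (fun n : ℕ => 1 - x / ((n:ℝ) + x)) atTop (𝓝 (1 - 0)) :=
      tendsto_const_nhds.sub h1
    rw [sub_zero] at h2
    refine h2.congr (fun n => ?_)
    have hne : ((n:ℝ) + x) ≠ 0 := by positivity
    field_simp
    ring
  have := hB.mul hA
  rw [one_mul] at this
  refine this.congr (fun n => ?_)
  have hnx : (0:ℝ) < (n:ℝ) + x := by positivity
  have hny : (0:ℝ) < (n:ℝ) + y := by linarith
  have e1 : 1 + (y - x) / ((n:ℝ) + x) = ((n:ℝ) + y) / ((n:ℝ) + x) := by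
    field_simp
    ring
  rw [e1, Real.log_div hny.ne' hnx.ne']
  field_simp

lemma binom_tsum (k : ℕ) (x : ℝ) : ∑' n : ℕ, (k.choose n : ℝ) * x ^ n = (x + 1) ^ k := by
  rw [tsum_eq_sum (s := Finset.range (k+1)) (f := fun n => (k.choose n : ℝ) * x ^ n)
    (fun n hn => by
      have hk : k < n := by simpa using Nat.not_lt.1 (fun h => hn (Finset.mem_range.2 h)) 
      simp [Nat.choose_eq_zero_of_lt hk])]
  rw [add_pow]
  simp [mul_comm]

section

variable {α : ℝ} {p : ℕ → ℝ}

lemma choose_tsum_eq (hα0 : 0 < α)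
    (hB : ∀ n, p n = α * ∑' j : ℕ, (j.choose n : ℝ) * p j) (n : ℕ) :
    ∑' j : ℕ, (j.choose n : ℝ) * p j = p n / α := by
  rw [hB n]
  field_simp

lemma pmf_summable_pow (hα0 : 0 < α) (hp0 : ∀ n, 0 ≤ p n) (hp1 : HasSum p 1)
    (hS : ∀ n, Summable fun j : ℕ => (j.choose n : ℝ) * p j)
    (hB : ∀ n, p n = α * ∑' j : ℕ, (j.choose n : ℝ) * p j) :
    ∀ m : ℕ, Summable fun k => p k * ((m : ℝ) + 1) ^ k := by
  intro m
  induction m with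
  | zero => simpa using hp1.summable
  | succ m hm =>
    have hg : Summable (fun nk : ℕ × ℕ =>
        (nk.2.choose nk.1 : ℝ) * p nk.2 * ((m:ℝ)+1) ^ nk.1) := by
      refine (summable_prod_of_nonneg ?_).2 ⟨fun n => ?_, ?_⟩
      · exact Pi.le_def.2 fun nk =>
          mul_nonneg (mul_nonneg (Nat.cast_nonneg _) (hp0 _)) (by positivity)
      · simpa only [] using (hS n).mul_right (((m:ℝ)+1) ^ n)
      · have h2 : Summable fun n => (p n * ((m:ℝ)+1) ^ n) / α := hm.div_const α
        refine h2.congr fun n => ?_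
        simp only []
        rw [tsum_mul_right, choose_tsum_eq hα0 hB n]
        ring
    have hg2 := hg.prod_symm.prod
    refine hg2.congr fun k => ?_
    simp only [Prod.swap_prod_mk]
    have h2 : ∑' n, (k.choose n : ℝ) * p k * ((m:ℝ)+1) ^ n
        = p k * ∑' n, (k.choose n : ℝ) * ((m:ℝ)+1) ^ n := by
      rw [← tsum_mul_left]
      exact tsum_congr fun n => by ring
    rw [h2, binom_tsum]
    push_cast
    ring_nf

lemma pmf_summable_pow_real (hα0 : 0 < α) (hp0 : ∀ n, 0 ≤ p n) (hp1 : HasSum p 1)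
    (hS : ∀ n, Summable fun j : ℕ => (j.choose n : ℝ) * p j)
    (hB : ∀ n, p n = α * ∑' j : ℕ, (j.choose n : ℝ) * p j) (x : ℝ) :
    Summable fun k => p k * x ^ k := by
  apply Summable.of_abs
  refine Summable.of_nonneg_of_le (fun k => abs_nonneg _) (fun k => ?_)
    (pmf_summable_pow hα0 hp0 hp1 hS hB ⌈|x|⌉₊)
  rw [abs_mul, abs_of_nonneg (hp0 k), abs_pow]
  refine mul_le_mul_of_nonneg_left ?_ (hp0 k)
  exact pow_le_pow_left₀ (abs_nonneg x) (le_trans (Nat.le_ceil _) (by linarith)) k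

lemma pmf_fe (hα0 : 0 < α) (hp0 : ∀ n, 0 ≤ p n) (hp1 : HasSum p 1)
    (hS : ∀ n, Summable fun j : ℕ => (j.choose n : ℝ) * p j)
    (hB : ∀ n, p n = α * ∑' j : ℕ, (j.choose n : ℝ) * p j) (x : ℝ) :
    ∑' k, p k * (x + 1) ^ k = (∑' k, p k * x ^ k) / α := by
  have habs : Summable fun nk : ℕ × ℕ =>
      |(nk.2.choose nk.1 : ℝ) * p nk.2 * x ^ nk.1| := by
    have hg : Summable fun nk : ℕ × ℕ =>
        (nk.2.choose nk.1 : ℝ) * p nk.2 * |x| ^ nk.1 := by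
      refine (summable_prod_of_nonneg ?_).2 ⟨fun n => ?_, ?_⟩
      · exact Pi.le_def.2 fun nk =>
          mul_nonneg (mul_nonneg (Nat.cast_nonneg _) (hp0 _)) (by positivity)
      · simpa only [] using (hS n).mul_right (|x| ^ n)
      · have h2 : Summable fun n => (p n * |x| ^ n) / α :=
          (pmf_summable_pow_real hα0 hp0 hp1 hS hB |x|).div_const α
        refine h2.congr fun n => ?_
        simp only []
        rw [tsum_mul_right, choose_tsum_eq hα0 hB n]
        ring
    refine hg.congr fun nk => ?_
    simp [abs_mul, abs_pow, Nat.abs_cast, abs_of_nonneg (hp0 nk.2)]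
  have hunc : Summable (Function.uncurry
      (fun n k : ℕ => (k.choose n : ℝ) * p k * x ^ n)) := by
    refine Summable.of_abs ?_
    simpa only [Function.uncurry] using habs
  have hcomm : ∑' k, ∑' n, ((k.choose n : ℝ) * p k * x ^ n)
      = ∑' n, ∑' k, ((k.choose n : ℝ) * p k * x ^ n) := Summable.tsum_comm hunc
  have lhs_eq : ∑' k, p k * (x + 1) ^ k
      = ∑' k, ∑' n, (k.choose n : ℝ) * p k * x ^ n := by
    refine tsum_congr fun k => ?_
    rw [← binom_tsum k x, ← tsum_mul_left]
    exact tsum_congr fun n => by ring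
  have rhs_eq : (∑' n, ∑' k, (k.choose n : ℝ) * p k * x ^ n)
      = (∑' n, p n * x ^ n) / α := by
    have he : ∀ n : ℕ, (∑' k, (k.choose n : ℝ) * p k * x ^ n) = (p n * x ^ n) / α := by
      intro n
      rw [tsum_mul_right, choose_tsum_eq hα0 hB n]
      ring
    rw [tsum_congr he, ← tsum_div_const]
  rw [lhs_eq, hcomm, rhs_eq]


theorem pmf_forward (hα0 : 0 < α) (hα1 : α < 1) (hp0 : ∀ n, 0 ≤ p n) (hp1 : HasSum p 1)
    (hS : ∀ n, Summable fun j : ℕ => (j.choose n : ℝ) * p j)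
    (hB : ∀ n, p n = α * ∑' j : ℕ, (j.choose n : ℝ) * p j) :
    ∀ n : ℕ, p n = α * (-Real.log α) ^ n / (n.factorial : ℝ) := by
  set mu : ℝ := -Real.log α with hmudef
  have hmu : 0 < mu := neg_pos.2 (Real.log_neg hα0 hα1)
  have hαexp : Real.exp (-mu) = α := by
    rw [hmudef, neg_neg, Real.exp_log hα0]
  have hsum : ∀ x : ℝ, Summable fun k => p k * x ^ k :=
    pmf_summable_pow_real hα0 hp0 hp1 hS hB
  have htsum1 : ∑' k, p k * (1:ℝ) ^ k = 1 := by
    simpa using hp1.tsum_eq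
  -- positivity of the generating function
  have hp00 : p 0 = α := by
    have h0 := hB 0
    have he : (fun j : ℕ => ((j.choose 0 : ℕ) : ℝ) * p j) = p := funext fun j => by simp
    rw [he, hp1.tsum_eq, mul_one] at h0
    exact h0
  have hΦpos : ∀ x : ℝ, 0 ≤ x → 0 < ∑' k, p k * x ^ k := by
    intro x hx
    have hle : p 0 * x ^ 0 ≤ ∑' k, p k * x ^ k :=
      Summable.le_tsum (hsum x) 0 fun j _ => mul_nonneg (hp0 j) (pow_nonneg hx j)
    simp only [pow_zero, mul_one, hp00] at hle
    exact lt_of_lt_of_le hα0 hle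
  -- iterated functional equation
  have hshift : ∀ (x : ℝ) (n : ℕ),
      ∑' k, p k * (x + n) ^ k = (∑' k, p k * x ^ k) / α ^ n := by
    intro x n
    induction n with
    | zero => simp
    | succ n ih =>
      have e1 : x + ((n+1 : ℕ) : ℝ) = (x + n) + 1 := by push_cast; ring
      rw [e1, pmf_fe hα0 hp0 hp1 hS hB (x + n), ih]
      rw [pow_succ]
      field_simp
  have hlog_shift : ∀ (x : ℝ), 0 < x → ∀ (n : ℕ),
      Real.log (∑' k, p k * (x + n) ^ k) = Real.log (∑' k, p k * x ^ k) + n * mu := by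
    intro x hx n
    rw [hshift x n, Real.log_div (hΦpos x hx.le).ne' (pow_pos hα0 n).ne', Real.log_pow]
    rw [hmudef]
    ring
  -- convexity of t ↦ log Φ(e^t)
  have hK : ConvexOn ℝ Set.univ (fun t : ℝ => Real.log (∑' k, p k * Real.exp t ^ k)) := by
    refine ⟨convex_univ, ?_⟩
    intro s _ t _ a b ha hb hab
    rcases eq_or_lt_of_le ha with ha0 | ha0
    · have hb1 : b = 1 := by linarith
      simp [← ha0, hb1]
    rcases eq_or_lt_of_le hb with hb0 | hb0
    · have ha1 : a = 1 := by linarith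
      simp [← hb0, ha1]
    have hb' : b = 1 - a := by linarith
    have ha1 : a < 1 := by linarith
    have key := tsum_rpow_holder (fun n => p n * Real.exp s ^ n)
      (fun n => p n * Real.exp t ^ n)
      (fun n => mul_nonneg (hp0 n) (pow_nonneg (Real.exp_pos s).le n))
      (fun n => mul_nonneg (hp0 n) (pow_nonneg (Real.exp_pos t).le n))
      (hsum _) (hsum _) ha0 ha1
    have hpoint : ∀ n : ℕ, (p n * Real.exp s ^ n) ^ a * (p n * Real.exp t ^ n) ^ (1-a)
        = p n * Real.exp (a • s + b • t) ^ n := by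
      intro n
      rw [Real.mul_rpow (hp0 n) (pow_nonneg (Real.exp_pos s).le n),
        Real.mul_rpow (hp0 n) (pow_nonneg (Real.exp_pos t).le n)]
      have e1 : ∀ u : ℝ, (Real.exp u ^ n : ℝ) = Real.exp (n * u) :=
        fun u => (Real.exp_nat_mul u n).symm
      rw [e1 s, e1 t, ← Real.exp_mul, ← Real.exp_mul]
      have e2 : p n ^ a * p n ^ (1-a) = p n := by
        rw [← Real.rpow_add' (hp0 n) (by norm_num), add_sub_cancel, Real.rpow_one]
      have e3 : Real.exp (a • s + b • t) ^ n = Real.exp (n * (a*s) + n * (b*t)) := by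
        rw [← Real.exp_nat_mul]
        congr 1
        simp [smul_eq_mul]
        ring
      rw [e3]
      calc p n ^ a * Real.exp (n * s * a) * (p n ^ (1-a) * Real.exp (n * t * (1-a)))
          = (p n ^ a * p n ^ (1-a)) * (Real.exp (n * s * a) * Real.exp (n * t * (1-a))) := by
            ring
        _ = p n * Real.exp (n * (a*s) + n * (b*t)) := by
            rw [e2, ← Real.exp_add, hb']
            congr 1
            ring
    rw [tsum_congr hpoint] at key
    have hlog := Real.log_le_log (hΦpos _ (Real.exp_pos _).le) key
    calc Real.log (∑' k, p k * Real.exp (a • s + b • t) ^ k)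
        ≤ Real.log ((∑' n, p n * Real.exp s ^ n) ^ a * (∑' n, p n * Real.exp t ^ n) ^ (1-a)) :=
          hlog
      _ = a • Real.log (∑' k, p k * Real.exp s ^ k) + b • Real.log (∑' k, p k * Real.exp t ^ k) := by
          rw [Real.log_mul (Real.rpow_pos_of_pos (hΦpos _ (Real.exp_pos _).le) _).ne'
            (Real.rpow_pos_of_pos (hΦpos _ (Real.exp_pos _).le) _).ne',
            Real.log_rpow (hΦpos _ (Real.exp_pos _).le),
            Real.log_rpow (hΦpos _ (Real.exp_pos _).le), hb']
          simp [smul_eq_mul]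
  -- slope inequality in the limit
  have hslope : ∀ a b c : ℝ, 0 < a → a < b → b < c →
      (Real.log (∑' k, p k * b ^ k) - Real.log (∑' k, p k * a ^ k)) * (c - b)
        ≤ (Real.log (∑' k, p k * c ^ k) - Real.log (∑' k, p k * b ^ k)) * (b - a) := by
    intro a b c ha hab hbc
    have hbpos : 0 < b := ha.trans hab
    have hcpos : 0 < c := hbpos.trans hbc
    have step : ∀ n : ℕ,
        (Real.log (∑' k, p k * b ^ k) - Real.log (∑' k, p k * a ^ k))
            * ((n:ℝ) * (Real.log ((n:ℝ) + c) - Real.log ((n:ℝ) + b)))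
          ≤ (Real.log (∑' k, p k * c ^ k) - Real.log (∑' k, p k * b ^ k))
            * ((n:ℝ) * (Real.log ((n:ℝ) + b) - Real.log ((n:ℝ) + a))) := by
      intro n
      have hna : (0:ℝ) < (n:ℝ) + a := by positivity
      have hnb : (0:ℝ) < (n:ℝ) + b := by linarith
      have hnc : (0:ℝ) < (n:ℝ) + c := by linarith
      have hab' : Real.log ((n:ℝ) + a) < Real.log ((n:ℝ) + b) := Real.log_lt_log hna (by linarith)
      have hbc' : Real.log ((n:ℝ) + b) < Real.log ((n:ℝ) + c) := Real.log_lt_log hnb (by linarith)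
      have key := hK.slope_mono_adjacent (Set.mem_univ (Real.log ((n:ℝ) + a)))
        (Set.mem_univ (Real.log ((n:ℝ) + c))) hab' hbc'
      simp only [Real.exp_log hna, Real.exp_log hnb, Real.exp_log hnc] at key
      have ea : ∑' k, p k * ((n:ℝ) + a) ^ k = (∑' k, p k * a ^ k) / α ^ n := by
        have := hshift a n; rw [add_comm] at this; exact this
      have eb : ∑' k, p k * ((n:ℝ) + b) ^ k = (∑' k, p k * b ^ k) / α ^ n := by
        have := hshift b n; rw [add_comm] at this; exact this
      have ec : ∑' k, p k * ((n:ℝ) + c) ^ k = (∑' k, p k * c ^ k) / α ^ n := by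
        have := hshift c n; rw [add_comm] at this; exact this
      rw [ea, eb, ec] at key
      have hαn : (0:ℝ) < α ^ n := pow_pos hα0 n
      rw [Real.log_div (hΦpos a ha.le).ne' hαn.ne', Real.log_div (hΦpos b hbpos.le).ne',
        Real.log_div (hΦpos c hcpos.le).ne' hαn.ne'] at key
      · have key2 : (Real.log (∑' k, p k * b ^ k) - Real.log (∑' k, p k * a ^ k))
              / (Real.log ((n:ℝ) + b) - Real.log ((n:ℝ) + a))
            ≤ (Real.log (∑' k, p k * c ^ k) - Real.log (∑' k, p k * b ^ k))
              / (Real.log ((n:ℝ) + c) - Real.log ((n:ℝ) + b)) := by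
          refine Eq.trans_le ?_ (key.trans_eq ?_) <;> ring
        rw [div_le_div_iff₀ (by linarith) (by linarith)] at key2
        have hn0 : (0:ℝ) ≤ (n:ℝ) := Nat.cast_nonneg n
        calc (Real.log (∑' k, p k * b ^ k) - Real.log (∑' k, p k * a ^ k))
              * ((n:ℝ) * (Real.log ((n:ℝ) + c) - Real.log ((n:ℝ) + b)))
            = (n:ℝ) * ((Real.log (∑' k, p k * b ^ k) - Real.log (∑' k, p k * a ^ k))
              * (Real.log ((n:ℝ) + c) - Real.log ((n:ℝ) + b))) := by ring
          _ ≤ (n:ℝ) * ((Real.log (∑' k, p k * c ^ k) - Real.log (∑' k, p k * b ^ k))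
              * (Real.log ((n:ℝ) + b) - Real.log ((n:ℝ) + a))) :=
              mul_le_mul_of_nonneg_left key2 hn0
          _ = (Real.log (∑' k, p k * c ^ k) - Real.log (∑' k, p k * b ^ k))
              * ((n:ℝ) * (Real.log ((n:ℝ) + b) - Real.log ((n:ℝ) + a))) := by ring
      · exact hαn.ne'
    have t1 := (nat_mul_log_sub_tendsto hbpos hbc).const_mul
      (Real.log (∑' k, p k * b ^ k) - Real.log (∑' k, p k * a ^ k))
    have t2 := (nat_mul_log_sub_tendsto ha hab).const_mul
      (Real.log (∑' k, p k * c ^ k) - Real.log (∑' k, p k * b ^ k))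
    exact le_of_tendsto_of_tendsto' t1 t2 step
  -- compute log Φ on (1,2)
  have hL1 : Real.log (∑' k, p k * (1:ℝ) ^ k) = 0 := by rw [htsum1, Real.log_one]
  have hL2 : Real.log (∑' k, p k * (2:ℝ) ^ k) = mu := by
    have h12 : (1:ℝ) + ((1:ℕ):ℝ) = 2 := by norm_num
    have h := hlog_shift 1 one_pos 1
    rw [h12, hL1] at h
    rw [h]
    push_cast
    ring
  have hlin : ∀ x : ℝ, 1 < x → x < 2 → Real.log (∑' k, p k * x ^ k) = mu * (x - 1) := by
    intro x hx1 hx2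
    have hx0 : 0 < x := by linarith
    have i1 := hslope 1 x 2 one_pos hx1 hx2
    have i2 := hslope x 2 (x+1) hx0 hx2 (by linarith)
    have ex1 : Real.log (∑' k, p k * (x+1) ^ k) = Real.log (∑' k, p k * x ^ k) + mu := by
      have := hlog_shift x hx0 1
      simp only [Nat.cast_one] at this
      rw [this]
      ring
    rw [hL1, hL2] at i1
    rw [hL2, ex1] at i2
    nlinarith [i1, i2]
  -- Φ = α exp(mu x) on (0,1]
  have hφ : ∀ x : ℝ, 0 < x → x ≤ 1 → ∑' k, p k * x ^ k = α * Real.exp (mu * x) := by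
    intro x hx0 hx1
    rcases eq_or_lt_of_le hx1 with h1 | h1
    · rw [h1, htsum1, mul_one, ← hαexp, ← Real.exp_add]
      norm_num
    · have hx1' : 1 < x + 1 := by linarith
      have hx2' : x + 1 < 2 := by linarith
      have ex1 : Real.log (∑' k, p k * (x+1) ^ k) = Real.log (∑' k, p k * x ^ k) + mu := by
        have := hlog_shift x hx0 1
        simp only [Nat.cast_one] at this
        rw [this]; ring
      have e2 := hlin (x+1) hx1' hx2'
      rw [ex1] at e2
      have e3 : Real.log (∑' k, p k * x ^ k) = mu * x - mu := by
        ring_nf at e2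
        linarith
      have e4 : ∑' k, p k * x ^ k = Real.exp (mu * x - mu) := by
        rw [← e3, Real.exp_log (hΦpos x hx0.le)]
      rw [e4, ← hαexp, ← Real.exp_add]
      congr 1
      ring
  -- coefficient extraction
  have hexp_hs : ∀ x : ℝ, HasSum (fun n : ℕ => α * mu ^ n / (n.factorial : ℝ) * x ^ n)
      (α * Real.exp (mu * x)) := by
    intro x
    have hs : HasSum (fun n : ℕ => (mu*x) ^ n / (n.factorial : ℝ)) (Real.exp (mu*x)) := by
      have h := NormedSpace.expSeries_div_hasSum_exp (mu*x)
      rwa [← Real.exp_eq_exp_ℝ] at h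
    have h2 := hs.mul_left α
    have hfe : (fun n : ℕ => α * ((mu*x) ^ n / (n.factorial : ℝ)))
        = fun n : ℕ => α * mu ^ n / (n.factorial : ℝ) * x ^ n := funext fun n => by
      rw [mul_pow]; ring
    rwa [hfe] at h2
  have hq_abs : Summable fun n : ℕ => |p n - α * mu ^ n / (n.factorial : ℝ)| := by
    have hc : Summable fun n : ℕ => α * mu ^ n / (n.factorial : ℝ) := by
      have := (hexp_hs 1).summable
      refine this.congr fun n => ?_
      simp
    refine Summable.of_nonneg_of_le (fun n => abs_nonneg _) (fun n => ?_)
      (hp1.summable.add hc)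
    have h1 : |p n - α * mu ^ n / (n.factorial : ℝ)|
        ≤ |p n| + |α * mu ^ n / (n.factorial : ℝ)| := by
      rw [sub_eq_add_neg]
      exact (abs_add_le _ _).trans (by rw [abs_neg])
    have h2 : (0:ℝ) ≤ α * mu ^ n / (n.factorial : ℝ) := by positivity
    rw [abs_of_nonneg (hp0 n), abs_of_nonneg h2] at h1
    exact h1
  have hzero : ∀ x : ℝ, 0 < x → x ≤ 1 →
      ∑' n, (p n - α * mu ^ n / (n.factorial : ℝ)) * x ^ n = 0 := by
    intro x hx0 hx1
    have he : (fun n : ℕ => (p n - α * mu ^ n / (n.factorial : ℝ)) * x ^ n)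
        = fun n : ℕ => p n * x ^ n - α * mu ^ n / (n.factorial : ℝ) * x ^ n :=
      funext fun n => by ring
    rw [he, Summable.tsum_sub (hsum x) (hexp_hs x).summable, (hexp_hs x).tsum_eq, hφ x hx0 hx1,
      sub_self]
  have hfin := coeffs_eq_zero_of_tsum_eq_zero
    (fun n => p n - α * mu ^ n / (n.factorial : ℝ)) hq_abs hzero
  intro n
  have := hfin n
  linarith [this]

theorem pmf_backward (hα0 : 0 < α) (hα1 : α < 1)
    (hpois : ∀ n : ℕ, p n = α * (-Real.log α) ^ n / (n.factorial : ℝ)) :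
    (∀ n : ℕ, Summable (fun j : ℕ => (j.choose n : ℝ) * p j)) ∧
      (∀ n : ℕ, p n = α * ∑' j : ℕ, (j.choose n : ℝ) * p j) := by
  set mu : ℝ := -Real.log α with hmudef
  have hmu : 0 < mu := neg_pos.2 (Real.log_neg hα0 hα1)
  have hαexp : Real.exp (-mu) = α := by rw [hmudef, neg_neg, Real.exp_log hα0]
  have hexpmu : Real.exp mu = 1 / α := by
    rw [eq_div_iff hα0.ne', ← hαexp, ← Real.exp_add]
    simp
  have hsexp : HasSum (fun n : ℕ => mu ^ n / (n.factorial : ℝ)) (Real.exp mu) := by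
    have h := NormedSpace.expSeries_div_hasSum_exp mu
    rwa [← Real.exp_eq_exp_ℝ] at h
  -- the shifted term identity
  have hterm : ∀ n j : ℕ, ((j + n).choose n : ℝ) * p (j + n)
      = (α * mu ^ n / (n.factorial : ℝ)) * (mu ^ j / (j.factorial : ℝ)) := by
    intro n j
    have hid := Nat.add_choose_mul_factorial_mul_factorial j n
    have hidR : (((j + n).choose n : ℕ) : ℝ) * (j.factorial : ℝ) * (n.factorial : ℝ)
        = ((j + n).factorial : ℝ) := by
      exact_mod_cast congrArg (Nat.cast : ℕ → ℝ) hid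
    rw [hpois (j + n)]
    have hjf : ((j.factorial : ℕ) : ℝ) ≠ 0 := Nat.cast_ne_zero.2 (Nat.factorial_ne_zero _)
    have hnf : ((n.factorial : ℕ) : ℝ) ≠ 0 := Nat.cast_ne_zero.2 (Nat.factorial_ne_zero _)
    have hjnf : (((j+n).factorial : ℕ) : ℝ) ≠ 0 := Nat.cast_ne_zero.2 (Nat.factorial_ne_zero _)
    field_simp
    rw [← hidR, pow_add]
    ring
  have hshift_sum : ∀ n : ℕ, HasSum (fun j : ℕ => ((j + n).choose n : ℝ) * p (j + n))
      ((α * mu ^ n / (n.factorial : ℝ)) * Real.exp mu) := by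
    intro n
    have hfe : (fun j : ℕ => ((j + n).choose n : ℝ) * p (j + n))
        = fun j : ℕ => (α * mu ^ n / (n.factorial : ℝ)) * (mu ^ j / (j.factorial : ℝ)) :=
      funext (hterm n)
    rw [hfe]
    exact hsexp.mul_left _
  have hfull : ∀ n : ℕ, HasSum (fun j : ℕ => (j.choose n : ℝ) * p j)
      (mu ^ n / (n.factorial : ℝ)) := by
    intro n
    have h2 := (hasSum_nat_add_iff (f := fun j : ℕ => (j.choose n : ℝ) * p j) n).1
      (hshift_sum n)
    have hz : ∑ i ∈ Finset.range n, (i.choose n : ℝ) * p i = 0 := by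
      refine Finset.sum_eq_zero fun i hi => ?_
      rw [Nat.choose_eq_zero_of_lt (Finset.mem_range.1 hi)]
      simp
    rw [hz, add_zero] at h2
    have hv : (α * mu ^ n / (n.factorial : ℝ)) * Real.exp mu = mu ^ n / (n.factorial : ℝ) := by
      rw [hexpmu]
      field_simp
    rwa [hv] at h2
  refine ⟨fun n => (hfull n).summable, fun n => ?_⟩
  rw [(hfull n).tsum_eq, hpois n]
  ring

end

/-- Let `α ∈ (0,1)` and let `p` be a probability mass function on
`ℕ`. Then `p` satisfies `p_n = α ∑_j C(j,n) p_j` for every `n` (with all these sums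
finite) if and only if `p` is the Poisson distribution with mean `μ = −ln α`, i.e.
`p_n = α (−ln α)ⁿ / n!` for all `n`. -/
theorem rao_rubin_poisson_characterization
    (α : ℝ) (hα0 : 0 < α) (hα1 : α < 1)
    (p : ℕ → ℝ) (hp0 : ∀ n : ℕ, 0 ≤ p n) (hp1 : HasSum p 1) :
    ((∀ n : ℕ, Summable (fun j : ℕ => (j.choose n : ℝ) * p j)) ∧
      (∀ n : ℕ, p n = α * ∑' j : ℕ, (j.choose n : ℝ) * p j))
    ↔
    (∀ n : ℕ, p n = α * (-Real.log α) ^ n / (n.factorial : ℝ)) := by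
  constructor
  · rintro ⟨hS, hB⟩
    exact pmf_forward hα0 hα1 hp0 hp1 hS hB
  · intro hpois
    exact pmf_backward hα0 hα1 hpois
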